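/- For all finite x ≠ y, the graphs G(ω+x,132) and G(ω+y,132) are not isomorphic. Specifically, in G(ω+x,132) the vertices of finite degree are exactly those of the form (n, ω+x−m−1) with n < ω and m < x, and such a vertex has degree n+m; hence the multiset of finite vertex degrees determines x. -/

import Mathlib

/-- Vertices: pairs of ordinals `(x, y)` with `x < y < o`. -/
abbrev OV (o : Ordinal) := {p : Ordinal × Ordinal // p.1 < p.2 ∧ p.2 < o}

/-- The shift graph `G(o, 132)` on an ordinal `o`. -/
def OG132 (o : Ordinal) : SimpleGraph (OV o) where
  Adj a b := a.val.2 = b.val.1 ∨ b.val.2 = a.val.1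
  symm := ⟨fun a b h => Or.symm h⟩
  loopless := ⟨fun a h => by rcases h with h | h <;> exact a.prop.1.ne' h⟩

section Aux
open Ordinal Set
universe u
lemma iio_nat (n : ℕ) : Set.Iio ((n : ℕ) : Ordinal.{u}) = Nat.cast '' Set.Iio n := by
  ext z
  simp only [mem_Iio, mem_image]
  constructor
  · intro hz
    obtain ⟨j, rfl⟩ := Ordinal.lt_omega0.mp (hz.trans (nat_lt_omega0 n))
    exact ⟨j, Nat.cast_lt.mp hz, rfl⟩
  · rintro ⟨j, hj, rfl⟩; exact Nat.cast_lt.mpr hj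

lemma ioo_nat (k x : ℕ) : Set.Ioo ((omega0 + k : Ordinal.{u})) (omega0 + x) =
    (fun j : ℕ => omega0 + j) '' Set.Ioo k x := by
  ext z
  simp only [mem_Ioo, mem_image]
  constructor
  · rintro ⟨h1, h2⟩
    have hle : omega0 ≤ z := le_trans le_self_add h1.le
    have hz : omega0 + (z - omega0) = z := Ordinal.add_sub_cancel_of_le hle
    have h2' : z - omega0 < x := by
      rw [← add_lt_add_iff_left omega0, hz]; exact h2
    obtain ⟨j, hj⟩ := Ordinal.lt_omega0.mp (h2'.trans (nat_lt_omega0 x))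
    refine ⟨j, ⟨?_, by rw [← Nat.cast_lt (α := Ordinal.{u}), ← hj]; exact h2'⟩, by rw [← hj, hz]⟩
    rw [← Nat.cast_lt (α := Ordinal.{u}), ← hj, ← add_lt_add_iff_left omega0, hz]
    exact h1
  · rintro ⟨j, ⟨hj1, hj2⟩, rfl⟩
    refine ⟨?_, ?_⟩
    · exact add_lt_add_right ((Nat.cast_lt (α := Ordinal.{u})).mpr hj1) omega0
    · exact add_lt_add_right ((Nat.cast_lt (α := Ordinal.{u})).mpr hj2) omega0

lemma iio_inf {u_ : Ordinal.{u}} (hu : omega0 ≤ u_) : (Set.Iio u_).Infinite := by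
  apply Set.Infinite.mono (s := Set.range (Nat.cast : ℕ → Ordinal.{u}))
  · rintro z ⟨j, rfl⟩; exact lt_of_lt_of_le (nat_lt_omega0 j) hu
  · exact Set.infinite_range_of_injective Nat.cast_injective

lemma ioo_inf {w o : Ordinal.{u}} (hw : w < omega0) (ho : omega0 ≤ o) : (Set.Ioo w o).Infinite := by
  obtain ⟨n, rfl⟩ := Ordinal.lt_omega0.mp hw
  apply Set.Infinite.mono (s := (Nat.cast : ℕ → Ordinal.{u}) '' Set.Ioi n)
  · rintro z ⟨j, hj, rfl⟩
    exact ⟨Nat.cast_lt.mpr hj, lt_of_lt_of_le (nat_lt_omega0 j) ho⟩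
  · exact (Set.Ioi_infinite n).image (Nat.cast_injective.injOn)

lemma iio_ncard (n : ℕ) : (Set.Iio ((n : ℕ) : Ordinal.{u})).ncard = n := by
  rw [iio_nat, Set.ncard_image_of_injective _ Nat.cast_injective,
    Set.ncard_eq_toFinset_card']
  simp

lemma ioo_ncard (k x : ℕ) : (Set.Ioo ((omega0 + k : Ordinal.{u})) (omega0 + x)).ncard = x - k - 1 := by
  have hinj : Function.Injective (fun j : ℕ => (omega0 + j : Ordinal.{u})) := by
    intro a b hab
    exact Nat.cast_injective ((add_right_inj omega0).mp hab)
  rw [ioo_nat, Set.ncard_image_of_injective _ hinj, Set.ncard_eq_toFinset_card']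
  simp

lemma nbhd_image (o : Ordinal.{u}) (v : OV o) :
    Subtype.val '' ((OG132 o).neighborSet v) =
      (fun z => (v.val.2, z)) '' Set.Ioo v.val.2 o ∪
      (fun t => (t, v.val.1)) '' Set.Iio v.val.1 := by
  ext p
  constructor
  · rintro ⟨b, hb, rfl⟩
    change v.val.2 = b.val.1 ∨ b.val.2 = v.val.1 at hb
    rcases hb with h | h
    · left
      exact ⟨b.val.2, ⟨h ▸ b.prop.1, b.prop.2⟩, by rw [Prod.ext_iff]; exact ⟨h, rfl⟩⟩
    · right
      exact ⟨b.val.1, h ▸ b.prop.1, by rw [Prod.ext_iff]; exact ⟨rfl, h.symm⟩⟩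
  · rintro (⟨z, hz, rfl⟩ | ⟨t, ht, rfl⟩)
    · exact ⟨⟨(v.val.2, z), hz.1, hz.2⟩, (Or.inl rfl : v.val.2 = v.val.2 ∨ _), rfl⟩
    · exact ⟨⟨(t, v.val.1), ht, v.prop.1.trans v.prop.2⟩, (Or.inr rfl : _ ∨ v.val.1 = v.val.1), rfl⟩

lemma nbhd_disj (o : Ordinal.{u}) (v : OV o) :
    Disjoint ((fun z => (v.val.2, z)) '' Set.Ioo v.val.2 o)
      ((fun t => (t, v.val.1)) '' Set.Iio v.val.1) := by
  rw [Set.disjoint_left]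
  rintro p ⟨z, hz, rfl⟩ ⟨t, ht, hte⟩
  rw [Prod.ext_iff] at hte
  obtain ⟨h1, h2⟩ := hte
  simp only at h1 h2
  exact absurd v.prop.1 (not_lt.mpr (le_of_lt (h2 ▸ hz.1)))

lemma nbhd_fin_iff (o : Ordinal.{u}) (v : OV o) :
    ((OG132 o).neighborSet v).Finite ↔
      (Set.Ioo v.val.2 o).Finite ∧ (Set.Iio v.val.1).Finite := by
  have hinj1 : Function.Injective (fun z : Ordinal.{u} => (v.val.2, z)) :=
    fun a b h => (Prod.ext_iff.mp h).2
  have hinj2 : Function.Injective (fun t : Ordinal.{u} => (t, v.val.1)) :=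
    fun a b h => (Prod.ext_iff.mp h).1
  constructor
  · intro h
    have h' := h.image Subtype.val
    rw [nbhd_image] at h'
    exact ⟨Set.Finite.of_finite_image (h'.subset subset_union_left) hinj1.injOn,
      Set.Finite.of_finite_image (h'.subset subset_union_right) hinj2.injOn⟩
  · rintro ⟨h1, h2⟩
    have : (Subtype.val '' ((OG132 o).neighborSet v)).Finite := by
      rw [nbhd_image]; exact (h1.image _).union (h2.image _)
    exact Set.Finite.of_finite_image this Subtype.val_injective.injOn

lemma nbhd_ncard (o : Ordinal.{u}) (v : OV o)
    (h1 : (Set.Ioo v.val.2 o).Finite) (h2 : (Set.Iio v.val.1).Finite) :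
    ((OG132 o).neighborSet v).ncard =
      (Set.Ioo v.val.2 o).ncard + (Set.Iio v.val.1).ncard := by
  have hinj1 : Function.Injective (fun z : Ordinal.{u} => (v.val.2, z)) :=
    fun a b h => (Prod.ext_iff.mp h).2
  have hinj2 : Function.Injective (fun t : Ordinal.{u} => (t, v.val.1)) :=
    fun a b h => (Prod.ext_iff.mp h).1
  rw [← Set.ncard_image_of_injective _ Subtype.val_injective, nbhd_image,
    Set.ncard_union_eq (nbhd_disj o v) (h1.image _) (h2.image _),
    Set.ncard_image_of_injective _ hinj1, Set.ncard_image_of_injective _ hinj2]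

lemma char_lem (x : ℕ) (v : OV (omega0.{u} + x)) :
    (((OG132 (omega0 + x)).neighborSet v).Finite ↔
        ∃ n m : ℕ, m < x ∧ v.val = ((n : Ordinal), omega0 + ((x - m - 1 : ℕ) : Ordinal))) ∧
      (∀ n m : ℕ, m < x → v.val = ((n : Ordinal), omega0 + ((x - m - 1 : ℕ) : Ordinal)) →
        ((OG132 (omega0 + x)).neighborSet v).ncard = n + m) := by
  constructor
  · rw [nbhd_fin_iff]
    constructor
    · rintro ⟨h1, h2⟩
      -- v.val.1 < omega0
      have hu : v.val.1 < omega0 := by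
        by_contra h
        exact (iio_inf (not_lt.mp h)) h2
      obtain ⟨n, hn⟩ := Ordinal.lt_omega0.mp hu
      -- omega0 ≤ v.val.2
      have hw : omega0 ≤ v.val.2 := by
        by_contra h
        exact (ioo_inf (not_le.mp h) le_self_add) h1
      have hz : omega0 + (v.val.2 - omega0) = v.val.2 := Ordinal.add_sub_cancel_of_le hw
      have hk : v.val.2 - omega0 < (x : Ordinal) := by
        rw [← add_lt_add_iff_left omega0, hz]; exact v.prop.2
      obtain ⟨k, hkk⟩ := Ordinal.lt_omega0.mp (hk.trans (nat_lt_omega0 x))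
      have hkx : k < x := by
        rw [← Nat.cast_lt (α := Ordinal.{u}), ← hkk]; exact hk
      refine ⟨n, x - k - 1, by omega, ?_⟩
      have : x - (x - k - 1) - 1 = k := by omega
      rw [Prod.ext_iff]
      exact ⟨hn, by rw [this, ← hkk, hz]⟩
    · rintro ⟨n, m, hm, hv⟩
      rw [hv]
      constructor
      · rw [ioo_nat]
        exact (Set.finite_Ioo _ _).image _
      · rw [iio_nat]
        exact (Set.finite_Iio _).image _
  · rintro n m hm hv
    have h1 : (Set.Ioo v.val.2 (omega0 + x)).Finite := by
      rw [hv, ioo_nat]; exact (Set.finite_Ioo _ _).image _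
    have h2 : (Set.Iio v.val.1).Finite := by
      rw [hv, iio_nat]; exact (Set.finite_Iio _).image _
    rw [nbhd_ncard _ v h1 h2, hv]
    simp only
    rw [ioo_ncard, iio_ncard]
    omega

lemma card_Sdeg (x d : ℕ) (hxd : x ≤ d) :
    {v : OV (omega0.{u} + x) | ((OG132 (omega0 + x)).neighborSet v).Finite ∧
      ((OG132 (omega0 + x)).neighborSet v).ncard = d}.ncard = x := by
  classical
  let f : {m : ℕ // m < x} → OV (omega0.{u} + x) := fun m =>
    ⟨(((d - m.1 : ℕ) : Ordinal), omega0 + ((x - m.1 - 1 : ℕ) : Ordinal)),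
     lt_of_lt_of_le (nat_lt_omega0 _) le_self_add,
     add_lt_add_right (Nat.cast_lt.mpr (by omega)) _⟩
  have hinj : Function.Injective f := by
    intro a b hab
    have h2 := congrArg (fun v : OV (omega0.{u} + x) => v.val.2) hab
    simp only [f] at h2
    have h3 := Nat.cast_injective ((add_right_inj omega0).mp h2)
    have := a.prop; have := b.prop
    exact Subtype.ext (by omega)
  have hset : {v : OV (omega0.{u} + x) | ((OG132 (omega0 + x)).neighborSet v).Finite ∧
      ((OG132 (omega0 + x)).neighborSet v).ncard = d} = Set.range f := by
    ext v
    simp only [Set.mem_setOf_eq, Set.mem_range]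
    constructor
    · rintro ⟨hfin, hcard⟩
      obtain ⟨n, m, hm, hv⟩ := (char_lem x v).1.mp hfin
      have hnc := (char_lem x v).2 n m hm hv
      refine ⟨⟨m, hm⟩, ?_⟩
      apply Subtype.ext
      rw [hv]
      have hn : d - m = n := by omega
      simp only [f, hn]
    · rintro ⟨m, rfl⟩
      have hv : (f m).val = (((d - m.1 : ℕ) : Ordinal), omega0 + ((x - m.1 - 1 : ℕ) : Ordinal)) := rfl
      refine ⟨(char_lem x (f m)).1.mpr ⟨d - m.1, m.1, m.prop, hv⟩, ?_⟩
      rw [(char_lem x (f m)).2 (d - m.1) m.1 m.prop hv]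
      have := m.prop; omega
  rw [hset, ← Nat.card_coe_set_eq, Nat.card_congr (Equiv.ofInjective f hinj).symm,
    Nat.card_congr Fin.equivSubtype.symm, Nat.card_eq_fintype_card, Fintype.card_fin]

end Aux

open Ordinal in
/-- For finite `x ≠ y`, `G(ω+x,132) ≇ G(ω+y,132)`.  Moreover, in `G(ω+x,132)` the
vertices of finite degree are exactly those of the form `(n, ω+x-m-1)` with `n < ω`
and `m < x`, and such a vertex has degree `n + m`. -/
theorem stmt_9 (x y : ℕ) (hxy : x ≠ y) :
    ¬ Nonempty (OG132 (omega0 + x) ≃g OG132 (omega0 + y)) ∧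
    ∀ v : OV (omega0 + x),
      (((OG132 (omega0 + x)).neighborSet v).Finite ↔
        ∃ n m : ℕ, m < x ∧ v.val = ((n : Ordinal), omega0 + ((x - m - 1 : ℕ) : Ordinal))) ∧
      (∀ n m : ℕ, m < x → v.val = ((n : Ordinal), omega0 + ((x - m - 1 : ℕ) : Ordinal)) →
        ((OG132 (omega0 + x)).neighborSet v).ncard = n + m) := by
  refine ⟨?_, fun v => char_lem x v⟩
  rintro ⟨f⟩
  set d := max x y with hd
  have hdeg : ∀ v : OV (omega0 + x),
      ((((OG132 (omega0 + x)).neighborSet v).Finite ↔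
        (((OG132 (omega0 + y)).neighborSet (f v)).Finite)) ∧
      ((OG132 (omega0 + y)).neighborSet (f v)).ncard =
        ((OG132 (omega0 + x)).neighborSet v).ncard) := by
    intro v
    constructor
    · rw [← Set.finite_coe_iff, ← Set.finite_coe_iff]
      exact Equiv.finite_iff (f.mapNeighborSet v)
    · rw [← Nat.card_coe_set_eq, ← Nat.card_coe_set_eq]
      exact (Nat.card_congr (f.mapNeighborSet v)).symm
  have hset : {v : OV (omega0 + y) | ((OG132 (omega0 + y)).neighborSet v).Finite ∧
        ((OG132 (omega0 + y)).neighborSet v).ncard = d} =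
      ⇑f '' {v : OV (omega0 + x) | ((OG132 (omega0 + x)).neighborSet v).Finite ∧
        ((OG132 (omega0 + x)).neighborSet v).ncard = d} := by
    ext w
    simp only [Set.mem_setOf_eq, Set.mem_image]
    constructor
    · rintro ⟨hfin, hcard⟩
      refine ⟨f.symm w, ?_, f.apply_symm_apply w⟩
      have h := hdeg (f.symm w)
      rw [f.apply_symm_apply w] at h
      exact ⟨h.1.mpr hfin, by rw [← h.2, hcard]⟩
    · rintro ⟨v, ⟨hfin, hcard⟩, rfl⟩
      exact ⟨(hdeg v).1.mp hfin, by rw [(hdeg v).2, hcard]⟩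
  have h1 := card_Sdeg x d (le_max_left x y)
  have h2 := card_Sdeg y d (le_max_right x y)
  rw [hset, Set.ncard_image_of_injective _ f.injective, h1] at h2
  exact hxy h2
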